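/- arXiv:2004.12282 — 7 statements merged into one kernel-verified Lean document; each statement's English description precedes it below -/
import Mathlib

section
/- Let A be an m×n real matrix and B a p×n real matrix. There exists an m×p real matrix X such that A + X·B has full column rank if and only if m ≥ n and the stacked matrix col{A, B} (the (m+p)×n matrix obtained by stacking A on top of B) has full column rank. -/
open Matrix

noncomputable section

/-- A real matrix has full column rank (FCR) iff its rank equals its number of columns. -/
def FCR {m n : Type*} [Fintype m] [Fintype n] (A : Matrix m n ℝ) : Prop :=
  A.rank = Fintype.card n

lemma fcr_iff_inj {m n : Type*} [Fintype m] [Fintype n] (A : Matrix m n ℝ) :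
    FCR A ↔ ∀ v, A *ᵥ v = 0 → v = 0 := by
  have hrn := A.mulVecLin.finrank_range_add_finrank_ker
  have hpi : Module.finrank ℝ (n → ℝ) = Fintype.card n := Module.finrank_pi ℝ
  constructor
  · intro h v hv
    have h' : A.rank = Fintype.card n := h
    have hker : Module.finrank ℝ (LinearMap.ker A.mulVecLin) = 0 := by
      have : A.rank = Module.finrank ℝ (LinearMap.range A.mulVecLin) := rfl
      omega
    rw [Submodule.finrank_eq_zero] at hker
    have : v ∈ LinearMap.ker A.mulVecLin := by
      simpa [LinearMap.mem_ker, Matrix.mulVecLin_apply] using hv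
    simpa [hker] using this
  · intro h
    have hker : LinearMap.ker A.mulVecLin = ⊥ := by
      ext v
      simp only [LinearMap.mem_ker, Submodule.mem_bot, Matrix.mulVecLin_apply]
      exact ⟨h v, fun hv => by simp [hv]⟩
    have : Module.finrank ℝ (LinearMap.ker A.mulVecLin) = 0 := by
      rw [hker]; exact finrank_bot ℝ _
    have : A.rank = Module.finrank ℝ (LinearMap.range A.mulVecLin) := rfl
    unfold FCR
    omega

lemma exists_injective_of_finrank_le {V W : Type*} [AddCommGroup V] [Module ℝ V]
    [AddCommGroup W] [Module ℝ W] [FiniteDimensional ℝ V] [FiniteDimensional ℝ W]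
    (h : Module.finrank ℝ V ≤ Module.finrank ℝ W) :
    ∃ f : V →ₗ[ℝ] W, Function.Injective f := by
  obtain ⟨v, hv⟩ := exists_linearIndependent_of_le_finrank h
  let b := Module.finBasis ℝ V
  refine ⟨b.constr ℝ v, ?_⟩
  rw [← LinearMap.ker_eq_bot]
  ext x
  simp only [LinearMap.mem_ker, Submodule.mem_bot]
  constructor
  · intro hx
    rw [Module.Basis.constr_apply_fintype] at hx
    have := Fintype.linearIndependent_iff.mp hv _ hx
    have hz : b.equivFun x = 0 := funext this
    have := b.equivFun.injective (by simpa using hz)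
    simpa using this
  · intro hx; simp [hx]

/-- Lemma 2: There exists `X` such that `A + X * B` has full column rank
iff `m ≥ n` and the stacked matrix `col{A, B}` has full column rank. -/
theorem exists_X_add_mul_fcr_iff (m n p : ℕ)
    (A : Matrix (Fin m) (Fin n) ℝ) (B : Matrix (Fin p) (Fin n) ℝ) :
    (∃ X : Matrix (Fin m) (Fin p) ℝ, FCR (A + X * B)) ↔
      (n ≤ m ∧ FCR (Matrix.fromRows A B)) := by
  constructor
  · rintro ⟨X, hX⟩
    rw [fcr_iff_inj] at hX
    constructor
    · -- n ≤ m from injectivity of (A + X*B).mulVecLin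
      have hinj : Function.Injective (A + X * B).mulVecLin := by
        rw [← LinearMap.ker_eq_bot, Submodule.eq_bot_iff]
        intro v hv
        rw [LinearMap.mem_ker, Matrix.mulVecLin_apply] at hv
        exact hX v hv
      have := LinearMap.finrank_le_finrank_of_injective hinj
      simpa [Module.finrank_pi] using this
    · rw [fcr_iff_inj]
      intro v hv
      rw [Matrix.fromRows_mulVec] at hv
      have hA : A *ᵥ v = 0 := funext fun i => congrFun hv (Sum.inl i)
      have hB : B *ᵥ v = 0 := funext fun i => congrFun hv (Sum.inr i)
      apply hX
      rw [Matrix.add_mulVec, ← Matrix.mulVec_mulVec, hA, hB]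
      simp
  · rintro ⟨hnm, hAB⟩
    rw [fcr_iff_inj] at hAB
    have hfg : ∀ v, A *ᵥ v = 0 → B *ᵥ v = 0 → v = 0 := by
      intro v h1 h2
      apply hAB
      rw [Matrix.fromRows_mulVec, h1, h2]
      ext (i | i) <;> simp
    set f := A.mulVecLin with hf
    set g := B.mulVecLin with hg
    set K := LinearMap.ker f with hK
    -- g restricted to K is injective
    set g' : K →ₗ[ℝ] (Fin p → ℝ) := g.comp K.subtype with hg'def
    have hg'inj : Function.Injective g' := by
      rw [← LinearMap.ker_eq_bot, Submodule.eq_bot_iff]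
      rintro ⟨v, hv⟩ hx
      have hAv : A *ᵥ v = 0 := by
        simpa [hK, LinearMap.mem_ker, hf, Matrix.mulVecLin_apply] using hv
      have hBv : B *ᵥ v = 0 := by
        simpa [hg'def, hg, Matrix.mulVecLin_apply] using hx
      have := hfg v hAv hBv
      exact Subtype.ext this
    set U := LinearMap.range g' with hUdef
    set e : K ≃ₗ[ℝ] U := LinearEquiv.ofInjective g' hg'inj with hedef
    obtain ⟨U', hUc⟩ := U.exists_isCompl
    set R := LinearMap.range f with hRdef
    obtain ⟨C, hCc⟩ := R.exists_isCompl
    have h1 : Module.finrank ℝ R + Module.finrank ℝ K = n := by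
      have := f.finrank_range_add_finrank_ker
      simpa [Module.finrank_pi] using this
    have h2 : Module.finrank ℝ R + Module.finrank ℝ C = m := by
      have := Submodule.finrank_add_eq_of_isCompl hCc
      simpa [Module.finrank_pi] using this
    have hKC : Module.finrank ℝ K ≤ Module.finrank ℝ C := by omega
    obtain ⟨γ₀, hγ₀⟩ := exists_injective_of_finrank_le hKC
    set γ : K →ₗ[ℝ] (Fin m → ℝ) := C.subtype.comp γ₀ with hγdef
    have hγinj : Function.Injective γ := C.injective_subtype.comp hγ₀
    have hγC : ∀ x, γ x ∈ C := fun x => (γ₀ x).2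
    set φ : U →ₗ[ℝ] (Fin m → ℝ) := γ.comp e.symm.toLinearMap with hφdef
    set ξ : (Fin p → ℝ) →ₗ[ℝ] (Fin m → ℝ) := LinearMap.ofIsCompl hUc φ 0 with hξdef
    set X := LinearMap.toMatrix' ξ with hXdef
    have hXw : ∀ w, X *ᵥ w = ξ w := by
      intro w
      rw [← Matrix.toLin'_apply, hXdef, Matrix.toLin'_toMatrix']
    have hξC : ∀ w, ξ w ∈ C := by
      intro w
      obtain ⟨y, z, hy, hz, hyz⟩ := Submodule.codisjoint_iff_exists_add_eq.mp hUc.codisjoint w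
      have h1 : ξ y = φ ⟨y, hy⟩ := LinearMap.ofIsCompl_left_apply hUc ⟨y, hy⟩
      have h2 : ξ z = 0 := by
        have := LinearMap.ofIsCompl_right_apply (φ := φ) (ψ := 0) hUc ⟨z, hz⟩
        simpa using this
      rw [← hyz, map_add, h1, h2, add_zero, hφdef]
      exact hγC _
    refine ⟨X, ?_⟩
    rw [fcr_iff_inj]
    intro v hv
    rw [Matrix.add_mulVec, ← Matrix.mulVec_mulVec, hXw] at hv
    have hfv : f v = - ξ (B *ᵥ v) := by
      have : A *ᵥ v = - ξ (B *ᵥ v) := by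
        rw [eq_neg_iff_add_eq_zero]; exact hv
      simpa [hf, Matrix.mulVecLin_apply] using this
    have hfvR : f v ∈ R := LinearMap.mem_range_self f v
    have hfvC : f v ∈ C := by rw [hfv]; exact neg_mem (hξC _)
    have hfv0 : f v = 0 := by
      have := hCc.disjoint
      rw [Submodule.disjoint_def] at this
      exact this _ hfvR hfvC
    have hξ0 : ξ (B *ᵥ v) = 0 := by rw [← neg_eq_zero, ← hfv, hfv0]
    have hvK : v ∈ K := hfv0
    have hwU : B *ᵥ v ∈ U := by
      refine ⟨⟨v, hvK⟩, ?_⟩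
      simp [hg'def, hg, Matrix.mulVecLin_apply]
    have hξw : ξ (B *ᵥ v) = φ ⟨B *ᵥ v, hwU⟩ :=
      LinearMap.ofIsCompl_left_apply hUc ⟨B *ᵥ v, hwU⟩
    have hsym0 : γ (e.symm ⟨B *ᵥ v, hwU⟩) = 0 := by
      rw [← hξ0, hξw, hφdef]; rfl
    have hsym : e.symm ⟨B *ᵥ v, hwU⟩ = 0 := by
      apply hγinj
      rw [hsym0, map_zero]
    have hw0 : B *ᵥ v = 0 := by
      have : (⟨B *ᵥ v, hwU⟩ : U) = e 0 := by
        rw [← hsym, LinearEquiv.apply_symm_apply]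
      rw [map_zero] at this
      exact congrArg Subtype.val this
    have hAv : A *ᵥ v = 0 := by simpa [hf, Matrix.mulVecLin_apply] using hfv0
    exact hfg v hAv hw0
end
end

section
/- For j = 1,…,m let A₁^{[j]}, A₂^{[j]}, A₃^{[j]}, B₁^{[j]}, B₂^{[j]}, B₃^{[j]} be real matrices such that for each i ∈ {1,2,3} all A_i^{[j]} have the same number of rows p_i, A_i^{[j]} and B_i^{[j]} have the same number of columns q_{ij}, and all B_i^{[j]} have the same number of rows s. Form the matrix M whose j-th column block is the matrix col{ diag{A₁^{[j]}, A₂^{[j]}, A₃^{[j]}}, [B₁^{[j]} B₂^{[j]} B₃^{[j]}] } (the block-diagonal matrix with diagonal blocks A₁^{[j]}, A₂^{[j]}, A₃^{[j]} stacked on top of the row-concatenation [B₁^{[j]} B₂^{[j]} B₃^{[j]}]), and form the matrix M' in the same way after deleting the A₂ and B₂ blocks, i.e., whose j-th column block is col{ diag{A₁^{[j]}, A₃^{[j]}}, [B₁^{[j]} B₃^{[j]}] }. If the row-concatenated matrix [A₂^{[1]} A₂^{[2]} ⋯ A₂^{[m]}] has full column rank, then M has full column rank if and only if M' has full column rank.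 -/
open Matrix

noncomputable section

theorem fcr_iff_ker {m n : Type*} [Fintype m] [Fintype n] (A : Matrix m n ℝ) :
    FCR A ↔ ∀ x, A.mulVec x = 0 → x = 0 := by
  have hrn := LinearMap.finrank_range_add_finrank_ker A.mulVecLin
  rw [Module.finrank_fintype_fun_eq_card] at hrn
  unfold FCR Matrix.rank
  constructor
  · intro h x hx
    have hker : Module.finrank ℝ (LinearMap.ker A.mulVecLin) = 0 := by omega
    rw [Submodule.finrank_eq_zero] at hker
    have : x ∈ LinearMap.ker A.mulVecLin := by simpa [Matrix.mulVecLin_apply] using hx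
    simpa [hker] using this
  · intro h
    have hker : LinearMap.ker A.mulVecLin = ⊥ :=
      LinearMap.ker_eq_bot'.mpr fun x hx => h x (by simpa [Matrix.mulVecLin_apply] using hx)
    rw [hker] at hrn
    simpa using hrn

/-- Lemma 3: with column blocks indexed by `j : Fin mb`, if the row-concatenated
matrix `[A₂^{[1]} ⋯ A₂^{[mb]}]` has full column rank, then the matrix `M` whose
`j`-th column block is `col{diag{A₁^{[j]}, A₂^{[j]}, A₃^{[j]}}, [B₁^{[j]} B₂^{[j]} B₃^{[j]}]}`
has full column rank iff the matrix `M'` whose `j`-th column block is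
`col{diag{A₁^{[j]}, A₃^{[j]}}, [B₁^{[j]} B₃^{[j]}]}` has full column rank. -/
theorem blockDiag_fcr_iff_delete_middle (mb p1 p2 p3 s : ℕ)
    (q1 q2 q3 : Fin mb → ℕ)
    (A1 : ∀ j, Matrix (Fin p1) (Fin (q1 j)) ℝ)
    (A2 : ∀ j, Matrix (Fin p2) (Fin (q2 j)) ℝ)
    (A3 : ∀ j, Matrix (Fin p3) (Fin (q3 j)) ℝ)
    (B1 : ∀ j, Matrix (Fin s) (Fin (q1 j)) ℝ)
    (B2 : ∀ j, Matrix (Fin s) (Fin (q2 j)) ℝ)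
    (B3 : ∀ j, Matrix (Fin s) (Fin (q3 j)) ℝ)
    (hA2 : FCR (Matrix.of fun (r : Fin p2) (c : Σ j : Fin mb, Fin (q2 j)) =>
      A2 c.1 r c.2)) :
    FCR (Matrix.of fun (r : (Fin p1 ⊕ (Fin p2 ⊕ Fin p3)) ⊕ Fin s)
        (c : Σ j : Fin mb, Fin (q1 j) ⊕ (Fin (q2 j) ⊕ Fin (q3 j))) =>
        Matrix.fromRows
          (Matrix.fromBlocks (A1 c.1) 0 0 (Matrix.fromBlocks (A2 c.1) 0 0 (A3 c.1)))
          (Matrix.fromCols (B1 c.1) (Matrix.fromCols (B2 c.1) (B3 c.1))) r c.2) ↔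
      FCR (Matrix.of fun (r : (Fin p1 ⊕ Fin p3) ⊕ Fin s)
        (c : Σ j : Fin mb, Fin (q1 j) ⊕ Fin (q3 j)) =>
        Matrix.fromRows (Matrix.fromBlocks (A1 c.1) 0 0 (A3 c.1))
          (Matrix.fromCols (B1 c.1) (B3 c.1)) r c.2) := by
  rw [fcr_iff_ker] at hA2 ⊢
  rw [fcr_iff_ker]
  set M : Matrix ((Fin p1 ⊕ (Fin p2 ⊕ Fin p3)) ⊕ Fin s)
      (Σ j : Fin mb, Fin (q1 j) ⊕ (Fin (q2 j) ⊕ Fin (q3 j))) ℝ :=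
    Matrix.of fun r c =>
        Matrix.fromRows
          (Matrix.fromBlocks (A1 c.1) 0 0 (Matrix.fromBlocks (A2 c.1) 0 0 (A3 c.1)))
          (Matrix.fromCols (B1 c.1) (Matrix.fromCols (B2 c.1) (B3 c.1))) r c.2 with hM
  set M' : Matrix ((Fin p1 ⊕ Fin p3) ⊕ Fin s) (Σ j : Fin mb, Fin (q1 j) ⊕ Fin (q3 j)) ℝ :=
    Matrix.of fun r c =>
        Matrix.fromRows (Matrix.fromBlocks (A1 c.1) 0 0 (A3 c.1))
          (Matrix.fromCols (B1 c.1) (B3 c.1)) r c.2 with hM'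
  constructor
  · intro hFCR x' hx'
    set x : (Σ j : Fin mb, Fin (q1 j) ⊕ (Fin (q2 j) ⊕ Fin (q3 j))) → ℝ :=
      fun c => Sum.elim (fun c1 => x' ⟨c.1, Sum.inl c1⟩)
        (Sum.elim (fun _ => (0:ℝ)) (fun c3 => x' ⟨c.1, Sum.inr c3⟩)) c.2 with hxdef
    have hx : M.mulVec x = 0 := by
      funext r
      obtain ((r1 | (r2 | r3)) | rs) := r
      · have := congrFun hx' (Sum.inl (Sum.inl r1))
        simp only [Matrix.mulVec, dotProduct, ← Finset.univ_sigma_univ, Finset.sum_sigma,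
          Fintype.sum_sum_type, Pi.zero_apply] at this ⊢
        simpa [hM, hM', hxdef] using this
      · simp [hM, Matrix.mulVec, dotProduct, ← Finset.univ_sigma_univ, Finset.sum_sigma,
          Fintype.sum_sum_type, hxdef]
      · have := congrFun hx' (Sum.inl (Sum.inr r3))
        simp only [Matrix.mulVec, dotProduct, ← Finset.univ_sigma_univ, Finset.sum_sigma,
          Fintype.sum_sum_type, Pi.zero_apply] at this ⊢
        simpa [hM, hM', hxdef] using this
      · have := congrFun hx' (Sum.inr rs)
        simp only [Matrix.mulVec, dotProduct, ← Finset.univ_sigma_univ, Finset.sum_sigma,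
          Fintype.sum_sum_type, Pi.zero_apply] at this ⊢
        simpa [hM, hM', hxdef] using this
    have hx0 := hFCR x hx
    funext c
    obtain ⟨j, (c1 | c3)⟩ := c
    · simpa [hxdef] using congrFun hx0 ⟨j, Sum.inl c1⟩
    · simpa [hxdef] using congrFun hx0 ⟨j, Sum.inr (Sum.inr c3)⟩
  · intro hFCR x hx
    -- middle part vanishes
    have h2 : ∀ j (c2 : Fin (q2 j)), x ⟨j, Sum.inr (Sum.inl c2)⟩ = 0 := by
      have hy : (Matrix.of fun (r : Fin p2) (c : Σ j : Fin mb, Fin (q2 j)) =>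
          A2 c.1 r c.2).mulVec (fun c => x ⟨c.1, Sum.inr (Sum.inl c.2)⟩) = 0 := by
        funext r2
        have := congrFun hx (Sum.inl (Sum.inr (Sum.inl r2)))
        simp only [Matrix.mulVec, dotProduct, ← Finset.univ_sigma_univ, Finset.sum_sigma,
          Fintype.sum_sum_type, Pi.zero_apply] at this ⊢
        simpa [hM] using this
      have := hA2 _ hy
      intro j c2
      simpa using congrFun this ⟨j, c2⟩
    set x' : (Σ j : Fin mb, Fin (q1 j) ⊕ Fin (q3 j)) → ℝ :=
      fun c => Sum.elim (fun c1 => x ⟨c.1, Sum.inl c1⟩)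
        (fun c3 => x ⟨c.1, Sum.inr (Sum.inr c3)⟩) c.2 with hxdef
    have hx' : M'.mulVec x' = 0 := by
      funext r
      obtain ((r1 | r3) | rs) := r
      · have := congrFun hx (Sum.inl (Sum.inl r1))
        simp only [Matrix.mulVec, dotProduct, ← Finset.univ_sigma_univ, Finset.sum_sigma,
          Fintype.sum_sum_type, Pi.zero_apply] at this ⊢
        simpa [hM, hM', hxdef] using this
      · have := congrFun hx (Sum.inl (Sum.inr (Sum.inr r3)))
        simp only [Matrix.mulVec, dotProduct, ← Finset.univ_sigma_univ, Finset.sum_sigma,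
          Fintype.sum_sum_type, Pi.zero_apply] at this ⊢
        simpa [hM, hM', hxdef] using this
      · have := congrFun hx (Sum.inr rs)
        simp only [Matrix.mulVec, dotProduct, ← Finset.univ_sigma_univ, Finset.sum_sigma,
          Fintype.sum_sum_type, Pi.zero_apply] at this ⊢
        simpa [hM, hM', hxdef, h2] using this
    have hx0 := hFCR x' hx'
    funext c
    obtain ⟨j, (c1 | (c2 | c3))⟩ := c
    · simpa [hxdef] using congrFun hx0 ⟨j, Sum.inl c1⟩
    · exact h2 j c2
    · simpa [hxdef] using congrFun hx0 ⟨j, Sum.inr c3⟩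
end
end

section
/- Let E be an m×n real matrix of rank r with SVD-partition U = [U₁ U₂], V = [V₁ V₂], S. Let B_x be an m×u real matrix and B_z a z×u real matrix. If the stacked matrix col{U₂ᵀ·B_x, B_z} has full row rank, then the matrix [U₁ B_x] (horizontal concatenation of U₁ and B_x) has full row rank. -/
open Matrix

noncomputable section

/-- A real matrix has full row rank (FRR) iff its rank equals its number of rows. -/
def FRR {m n : Type*} [Fintype m] [Fintype n] (A : Matrix m n ℝ) : Prop :=
  A.rank = Fintype.card m

/-- `E` is an `m × n` real matrix of rank `r` with SVD-partition
`U = [U₁ U₂]`, `V = [V₁ V₂]`, `S`: the matrices `U = [U₁ U₂]` and `V = [V₁ V₂]` are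
orthogonal, `S` is an `r × r` diagonal matrix with positive diagonal entries,
and `E = U₁ * S * V₁ᵀ`. -/
def IsSVDPartition {m n r : ℕ} (E : Matrix (Fin m) (Fin n) ℝ)
    (U₁ : Matrix (Fin m) (Fin r) ℝ) (U₂ : Matrix (Fin m) (Fin (m - r)) ℝ)
    (V₁ : Matrix (Fin n) (Fin r) ℝ) (V₂ : Matrix (Fin n) (Fin (n - r)) ℝ)
    (S : Matrix (Fin r) (Fin r) ℝ) : Prop :=
  r ≤ m ∧ r ≤ n ∧
    (Matrix.fromCols U₁ U₂)ᵀ * Matrix.fromCols U₁ U₂ = 1 ∧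
    (Matrix.fromCols V₁ V₂)ᵀ * Matrix.fromCols V₁ V₂ = 1 ∧
    (∃ d : Fin r → ℝ, (∀ i, 0 < d i) ∧ S = Matrix.diagonal d) ∧
    E = U₁ * S * V₁ᵀ ∧ E.rank = r

lemma frr_iff_li {a b : Type*} [Fintype a] [Fintype b] (M : Matrix a b ℝ) :
    FRR M ↔ LinearIndependent ℝ M.row := by
  rw [FRR, rank_eq_finrank_span_row, linearIndependent_iff_card_eq_finrank_span, Set.finrank,
    eq_comm]

lemma vecMul_eq_sum' {a b : Type*} [Fintype a] [Fintype b] (M : Matrix a b ℝ) (c : a → ℝ) :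
    c ᵥ* M = ∑ i, c i • M i := by
  funext j
  simp [vecMul, dotProduct, Finset.sum_apply]

lemma frr_iff_vecMul {a b : Type*} [Fintype a] [Fintype b] (M : Matrix a b ℝ) :
    FRR M ↔ ∀ c : a → ℝ, c ᵥ* M = 0 → c = 0 := by
  rw [frr_iff_li, Fintype.linearIndependent_iff]
  constructor
  · intro H c hc
    funext i
    exact H c ((vecMul_eq_sum' M c).symm.trans hc) i
  · intro H c hc i
    have := H c ((vecMul_eq_sum' M c).trans hc)
    exact congrFun this i

lemma frr_left_of_frr_fromRows {a b c : Type*} [Fintype a] [Fintype b] [Fintype c]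
    (A : Matrix a c ℝ) (B : Matrix b c ℝ) (h : FRR (Matrix.fromRows A B)) : FRR A := by
  rw [frr_iff_li] at h ⊢
  have := h.comp Sum.inl Sum.inl_injective
  exact this

/-- If `col{U₂ᵀ·B_x, B_z}` has full row rank, then `[U₁  B_x]` has full row rank. -/
theorem frr_concat_of_frr_col (m n r u z : ℕ)
    (E : Matrix (Fin m) (Fin n) ℝ)
    (U₁ : Matrix (Fin m) (Fin r) ℝ) (U₂ : Matrix (Fin m) (Fin (m - r)) ℝ)
    (V₁ : Matrix (Fin n) (Fin r) ℝ) (V₂ : Matrix (Fin n) (Fin (n - r)) ℝ)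
    (S : Matrix (Fin r) (Fin r) ℝ)
    (hsvd : IsSVDPartition E U₁ U₂ V₁ V₂ S)
    (Bx : Matrix (Fin m) (Fin u) ℝ) (Bz : Matrix (Fin z) (Fin u) ℝ)
    (h : FRR (Matrix.fromRows (U₂ᵀ * Bx) Bz)) :
    FRR (Matrix.fromCols U₁ Bx) := by
  obtain ⟨hrm, hrn, hU, hV, hSd, hE, hrk⟩ := hsvd
  have hA : FRR (U₂ᵀ * Bx) := frr_left_of_frr_fromRows _ _ h
  -- U is square: get U * Uᵀ = 1
  have e : Fin m ≃ Fin r ⊕ Fin (m - r) :=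
    (finCongr (Nat.add_sub_cancel' hrm)).symm.trans finSumFinEquiv.symm
  have hUU : Matrix.fromCols U₁ U₂ * (Matrix.fromCols U₁ U₂)ᵀ = 1 :=
    (Matrix.mul_eq_one_comm_of_equiv e.symm).mp hU
  rw [Matrix.transpose_fromCols, Matrix.fromCols_mul_fromRows] at hUU
  rw [frr_iff_vecMul]
  intro cv hc
  rw [Matrix.vecMul_fromCols] at hc
  have hc1 : cv ᵥ* U₁ = 0 := by
    funext j; exact congrFun hc (Sum.inl j)
  have hc2 : cv ᵥ* Bx = 0 := by
    funext j; exact congrFun hc (Sum.inr j)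
  set w : Fin (m - r) → ℝ := cv ᵥ* U₂ with hw
  have hcw : w ᵥ* U₂ᵀ = cv := by
    have h1 : cv ᵥ* (U₁ * U₁ᵀ + U₂ * U₂ᵀ) = cv := by rw [hUU, Matrix.vecMul_one]
    rw [Matrix.vecMul_add, ← Matrix.vecMul_vecMul, ← Matrix.vecMul_vecMul, hc1,
      Matrix.zero_vecMul, zero_add] at h1
    rw [hw]
    exact h1
  have hw0 : w = 0 := by
    refine (frr_iff_vecMul _).mp hA w ?_
    rw [← Matrix.vecMul_vecMul, hcw, hc2]
  rw [← hcw, hw0, Matrix.zero_vecMul]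
end
end

section
/- Let E be an m×n real matrix of rank r with SVD-partition U = [U₁ U₂], V = [V₁ V₂], S. Let A_xx (m×n), A_xv (m×v), A_zx (z×n), A_zv (z×v) and Φ (v×z) be real matrices such that I − A_zv·Φ is invertible. If the matrix U₂ᵀ·[A_xx·V₂ A_xv] has full column rank, then the matrix Ω = U₂ᵀ·(A_xx + A_xv·Φ·(I − A_zv·Φ)⁻¹·A_zx)·V₂ has full column rank. -/
open Matrix

noncomputable section

lemma fcr_iff_aux {m n : Type*} [Fintype m] [Fintype n] (A : Matrix m n ℝ) :
    FCR A ↔ ∀ x : n → ℝ, A *ᵥ x = 0 → x = 0 := by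
  rw [FCR, Matrix.rank]
  have h := LinearMap.finrank_range_add_finrank_ker A.mulVecLin
  rw [Module.finrank_pi ℝ] at h
  constructor
  · intro hr x hx
    have : Module.finrank ℝ (LinearMap.ker A.mulVecLin) = 0 := by omega
    have hk : LinearMap.ker A.mulVecLin = ⊥ := Submodule.finrank_eq_zero.mp this
    have := LinearMap.ker_eq_bot.mp hk
    exact this (by simpa [Matrix.mulVecLin_apply] using hx)
  · intro hx
    have hk : LinearMap.ker A.mulVecLin = ⊥ := by
      rw [LinearMap.ker_eq_bot']
      intro x hxk
      exact hx x (by simpa [Matrix.mulVecLin_apply] using hxk)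
    rw [hk, finrank_bot] at h
    omega

/-- If `U₂ᵀ·[A_xx·V₂  A_xv]` has full column rank, then
`Ω = U₂ᵀ·(A_xx + A_xv·Φ·(I − A_zv·Φ)⁻¹·A_zx)·V₂` has full column rank. -/
theorem omega_fcr_of_concat_fcr (m n r v z : ℕ)
    (E : Matrix (Fin m) (Fin n) ℝ)
    (U₁ : Matrix (Fin m) (Fin r) ℝ) (U₂ : Matrix (Fin m) (Fin (m - r)) ℝ)
    (V₁ : Matrix (Fin n) (Fin r) ℝ) (V₂ : Matrix (Fin n) (Fin (n - r)) ℝ)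
    (S : Matrix (Fin r) (Fin r) ℝ)
    (hsvd : IsSVDPartition E U₁ U₂ V₁ V₂ S)
    (Axx : Matrix (Fin m) (Fin n) ℝ) (Axv : Matrix (Fin m) (Fin v) ℝ)
    (Azx : Matrix (Fin z) (Fin n) ℝ) (Azv : Matrix (Fin z) (Fin v) ℝ)
    (Φ : Matrix (Fin v) (Fin z) ℝ) (hinv : IsUnit (1 - Azv * Φ))
    (h : FCR (U₂ᵀ * Matrix.fromCols (Axx * V₂) Axv)) :
    FCR (U₂ᵀ * (Axx + Axv * Φ * (1 - Azv * Φ)⁻¹ * Azx) * V₂) := by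
  rw [fcr_iff_aux] at h ⊢
  intro y hy
  set w : Fin v → ℝ := (Φ * (1 - Azv * Φ)⁻¹ * Azx * V₂) *ᵥ y with hw
  have key : (U₂ᵀ * Matrix.fromCols (Axx * V₂) Axv) *ᵥ Sum.elim y w = 0 := by
    rw [← Matrix.mulVec_mulVec, Matrix.fromCols_mulVec_sumElim, hw,
      Matrix.mulVec_mulVec]
    have : (Axx * V₂) *ᵥ y + (Axv * (Φ * (1 - Azv * Φ)⁻¹ * Azx * V₂)) *ᵥ y
        = ((Axx + Axv * Φ * (1 - Azv * Φ)⁻¹ * Azx) * V₂) *ᵥ y := by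
      rw [← Matrix.add_mulVec, Matrix.add_mul]
      congr 2
      simp only [Matrix.mul_assoc]
    rw [this, Matrix.mulVec_mulVec, ← Matrix.mul_assoc]
    exact hy
  have := h _ key
  ext i
  exact congrFun this (Sum.inl i)
end
end

section
/- Let E be an m×n real matrix of rank r with SVD-partition U = [U₁ U₂], V = [V₁ V₂], S. Let A_xx (m×n), A_xv (m×v), A_zx (z×n), A_zv (z×v) and Φ (v×z) be real matrices such that I − A_zv·Φ is invertible. Suppose the matrix U₂ᵀ·[A_xx·V₂ A_xv] does not have full column rank, and let the stacked matrix col{N_xx, N_xv} (with N_xx having n−r rows and N_xv having v rows) be a matrix whose columns form a basis of the (right) null space of U₂ᵀ·[A_xx·V₂ A_xv]. Then the matrix Ω = U₂ᵀ·(A_xx + A_xv·Φ·(I − A_zv·Φ)⁻¹·A_zx)·V₂ has full column rank if and only if the matrix N_xv − Φ·(A_zx·V₂·N_xx + A_zv·N_xv) has full column rank. -/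
open Matrix

noncomputable section

lemma fcr_iff {p q : Type*} [Fintype p] [Fintype q] (A : Matrix p q ℝ) :
    FCR A ↔ ∀ x : q → ℝ, A.mulVec x = 0 → x = 0 := by
  classical
  have hrn := LinearMap.finrank_range_add_finrank_ker A.mulVecLin
  have hdom : Module.finrank ℝ (q → ℝ) = Fintype.card q := Module.finrank_pi ℝ
  constructor
  · intro hA x hx
    have hker : Module.finrank ℝ (LinearMap.ker A.mulVecLin) = 0 := by
      unfold FCR Matrix.rank at hA; omega
    have hbot : LinearMap.ker A.mulVecLin = ⊥ := Submodule.finrank_eq_zero.mp hker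
    have hx' : x ∈ LinearMap.ker A.mulVecLin := by
      simpa [LinearMap.mem_ker, Matrix.mulVecLin_apply] using hx
    rw [hbot] at hx'
    simpa using hx'
  · intro h
    have hker : LinearMap.ker A.mulVecLin = ⊥ := by
      rw [LinearMap.ker_eq_bot']
      intro x hx
      exact h x (by simpa [Matrix.mulVecLin_apply] using hx)
    have : Module.finrank ℝ (LinearMap.ker A.mulVecLin) = 0 := by
      rw [hker]; simp
    unfold FCR Matrix.rank; omega

/-- If `u = (Φ * Azv) *ᵥ u` and `1 - Azv * Φ` is invertible then `u = 0`. -/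
lemma fix_vanish {v z : ℕ} (Φ : Matrix (Fin v) (Fin z) ℝ) (Azv : Matrix (Fin z) (Fin v) ℝ)
    (hinv : IsUnit (1 - Azv * Φ)) (u : Fin v → ℝ) (hu : u = Φ *ᵥ (Azv *ᵥ u)) : u = 0 := by
  have hdet : IsUnit (1 - Azv * Φ).det := (Matrix.isUnit_iff_isUnit_det _).mp hinv
  have hW2 : (1 - Azv * Φ)⁻¹ * (1 - Azv * Φ) = 1 := Matrix.nonsing_inv_mul _ hdet
  set t := Azv *ᵥ u with ht
  have htt : (1 - Azv * Φ) *ᵥ t = 0 := by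
    have h1 : t = (Azv * Φ) *ᵥ t := by
      conv_lhs => rw [ht, hu]
      rw [Matrix.mulVec_mulVec]
    rw [Matrix.sub_mulVec, Matrix.one_mulVec, ← h1, sub_self]
  have ht0 : t = 0 := by
    have := congrArg (fun w => (1 - Azv * Φ)⁻¹ *ᵥ w) htt
    simpa [Matrix.mulVec_mulVec, hW2, Matrix.one_mulVec] using this
  rw [hu, ht0, Matrix.mulVec_zero]

/-- When `U₂ᵀ·[A_xx·V₂  A_xv]` is not of full column rank and the columns of
`col{N_xx, N_xv}` form a basis of its null space, `Ω` has full column rank iff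
`N_xv − Φ·(A_zx·V₂·N_xx + A_zv·N_xv)` has full column rank. -/
theorem omega_fcr_iff_nullBasis_fcr (m n r v z k : ℕ)
    (E : Matrix (Fin m) (Fin n) ℝ)
    (U₁ : Matrix (Fin m) (Fin r) ℝ) (U₂ : Matrix (Fin m) (Fin (m - r)) ℝ)
    (V₁ : Matrix (Fin n) (Fin r) ℝ) (V₂ : Matrix (Fin n) (Fin (n - r)) ℝ)
    (S : Matrix (Fin r) (Fin r) ℝ)
    (hsvd : IsSVDPartition E U₁ U₂ V₁ V₂ S)
    (Axx : Matrix (Fin m) (Fin n) ℝ) (Axv : Matrix (Fin m) (Fin v) ℝ)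
    (Azx : Matrix (Fin z) (Fin n) ℝ) (Azv : Matrix (Fin z) (Fin v) ℝ)
    (Φ : Matrix (Fin v) (Fin z) ℝ) (hinv : IsUnit (1 - Azv * Φ))
    (hnot : ¬ FCR (U₂ᵀ * Matrix.fromCols (Axx * V₂) Axv))
    (Nxx : Matrix (Fin (n - r)) (Fin k) ℝ) (Nxv : Matrix (Fin v) (Fin k) ℝ)
    (hker : U₂ᵀ * Matrix.fromCols (Axx * V₂) Axv * Matrix.fromRows Nxx Nxv = 0)
    (hbasis : FCR (Matrix.fromRows Nxx Nxv))
    (hspan : ∀ x : Fin (n - r) ⊕ Fin v → ℝ,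
      (U₂ᵀ * Matrix.fromCols (Axx * V₂) Axv).mulVec x = 0 →
        ∃ c : Fin k → ℝ, (Matrix.fromRows Nxx Nxv).mulVec c = x) :
    FCR (U₂ᵀ * (Axx + Axv * Φ * (1 - Azv * Φ)⁻¹ * Azx) * V₂) ↔
      FCR (Nxv - Φ * (Azx * V₂ * Nxx + Azv * Nxv)) := by
  classical
  set W := (1 - Azv * Φ)⁻¹ with hWdef
  have hdet : IsUnit (1 - Azv * Φ).det := (Matrix.isUnit_iff_isUnit_det _).mp hinv
  have hW1 : (1 - Azv * Φ) * W = 1 := Matrix.mul_nonsing_inv _ hdet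
  -- key matrix identity
  have hkey : Φ * W * Azx * V₂ = Φ * Azv * (Φ * W * Azx * V₂) + Φ * (Azx * V₂) := by
    have h1 : W - Azv * Φ * W = 1 := by
      rw [← hW1, Matrix.sub_mul, Matrix.one_mul, Matrix.mul_assoc]
    have h2 : Φ * ((W - Azv * Φ * W) * (Azx * V₂)) = Φ * (Azx * V₂) := by
      rw [h1, Matrix.one_mul]
    calc Φ * W * Azx * V₂ = Φ * (W * (Azx * V₂)) := by simp only [Matrix.mul_assoc]
      _ = Φ * ((W - Azv * Φ * W) * (Azx * V₂)) + Φ * ((Azv * Φ * W) * (Azx * V₂)) := by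
          rw [Matrix.sub_mul, Matrix.mul_sub]; abel
      _ = Φ * Azv * (Φ * W * Azx * V₂) + Φ * (Azx * V₂) := by
          rw [h2]; simp only [Matrix.mul_assoc]; abel
  -- Ω = M * fromRows 1 P
  have hΩeq : U₂ᵀ * (Axx + Axv * Φ * W * Azx) * V₂
      = U₂ᵀ * Matrix.fromCols (Axx * V₂) Axv * Matrix.fromRows (1 : Matrix (Fin (n-r)) (Fin (n-r)) ℝ) (Φ * W * Azx * V₂) := by
    conv_rhs => rw [Matrix.mul_assoc, Matrix.fromCols_mul_fromRows, Matrix.mul_one]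
    simp only [Matrix.add_mul, Matrix.mul_add, Matrix.mul_assoc]
  rw [fcr_iff, fcr_iff]
  constructor
  · -- FCR Ω → FCR D
    intro hΩfcr c hc
    rw [Matrix.sub_mulVec, sub_eq_zero] at hc
    simp only [← Matrix.mulVec_mulVec, Matrix.mulVec_add, Matrix.add_mulVec] at hc
    have hkeyv := congrArg (fun (X : Matrix (Fin v) (Fin (n-r)) ℝ) => X *ᵥ (Nxx *ᵥ c)) hkey
    simp only [← Matrix.mulVec_mulVec, Matrix.mulVec_add, Matrix.add_mulVec] at hkeyv
    -- hc : Nxv *ᵥ c = Φ *ᵥ Azx *ᵥ V₂ *ᵥ Nxx *ᵥ c + Φ *ᵥ Azv *ᵥ Nxv *ᵥ c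
    -- hkeyv : q = Φ *ᵥ Azv *ᵥ q + Φ *ᵥ Azx *ᵥ V₂ *ᵥ Nxx *ᵥ c  where q := Φ*ᵥW*ᵥAzx*ᵥV₂*ᵥNxx*ᵥc
    have hu : Nxv *ᵥ c - Φ *ᵥ W *ᵥ Azx *ᵥ V₂ *ᵥ Nxx *ᵥ c
        = Φ *ᵥ (Azv *ᵥ (Nxv *ᵥ c - Φ *ᵥ W *ᵥ Azx *ᵥ V₂ *ᵥ Nxx *ᵥ c)) := by
      rw [Matrix.mulVec_sub Azv, Matrix.mulVec_sub Φ]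
      linear_combination hc - hkeyv
    have hyq : Nxv *ᵥ c = Φ *ᵥ W *ᵥ Azx *ᵥ V₂ *ᵥ Nxx *ᵥ c :=
      sub_eq_zero.mp (fix_vanish Φ Azv hinv _ hu)
    have hNc : Matrix.fromRows Nxx Nxv *ᵥ c
        = Matrix.fromRows 1 (Φ * W * Azx * V₂) *ᵥ (Nxx *ᵥ c) := by
      rw [Matrix.fromRows_mulVec, Matrix.fromRows_mulVec, Matrix.one_mulVec]
      rw [hyq]
      simp only [Matrix.mulVec_mulVec, Matrix.mul_assoc]
    have hΩ0 : (U₂ᵀ * (Axx + Axv * Φ * W * Azx) * V₂) *ᵥ (Nxx *ᵥ c) = 0 := by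
      rw [hΩeq, ← Matrix.mulVec_mulVec, ← hNc, Matrix.mulVec_mulVec, hker, Matrix.zero_mulVec]
    have hx0 : Nxx *ᵥ c = 0 := hΩfcr _ hΩ0
    have hy0 : Nxv *ᵥ c = 0 := by
      rw [hyq, hx0]
      simp only [Matrix.mulVec_zero]
    refine (fcr_iff _).mp hbasis c ?_
    rw [Matrix.fromRows_mulVec, hx0, hy0]
    ext (i | i) <;> simp
  · -- FCR D → FCR Ω
    intro hDfcr x hx
    rw [hΩeq] at hx
    have hfr : Matrix.fromRows (1 : Matrix (Fin (n-r)) (Fin (n-r)) ℝ) (Φ * W * Azx * V₂) *ᵥ x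
        = Sum.elim x ((Φ * W * Azx * V₂) *ᵥ x) := by
      rw [Matrix.fromRows_mulVec, Matrix.one_mulVec]
    have hMx : (U₂ᵀ * Matrix.fromCols (Axx * V₂) Axv) *ᵥ
        (Sum.elim x ((Φ * W * Azx * V₂) *ᵥ x)) = 0 := by
      rw [← hfr, Matrix.mulVec_mulVec]
      exact hx
    obtain ⟨c, hc⟩ := hspan _ hMx
    rw [Matrix.fromRows_mulVec] at hc
    have hc1 : Nxx *ᵥ c = x := funext fun i => congrFun hc (Sum.inl i)
    have hc2 : Nxv *ᵥ c = Φ *ᵥ W *ᵥ Azx *ᵥ V₂ *ᵥ x := by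
      have h := funext fun i => congrFun hc (Sum.inr i)
      rw [show (fun i => (Nxx *ᵥ c ⊕ᵥ Nxv *ᵥ c) (Sum.inr i)) = Nxv *ᵥ c from rfl] at h
      simp only [← Matrix.mulVec_mulVec] at h ⊢
      exact h
    have hD0 : (Nxv - Φ * (Azx * V₂ * Nxx + Azv * Nxv)) *ᵥ c = 0 := by
      have hkx := congrArg (fun (X : Matrix (Fin v) (Fin (n-r)) ℝ) => X *ᵥ x) hkey
      simp only [← Matrix.mulVec_mulVec, Matrix.add_mulVec, Matrix.mulVec_add,
        Matrix.sub_mulVec] at hkx ⊢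
      rw [hc1, hc2]
      linear_combination hkx
    have hc0 : c = 0 := hDfcr c hD0
    rw [← hc1, hc0, Matrix.mulVec_zero]
end
end

section
/- Let E be an n×n real matrix of rank r with SVD-partition U = [U₁ U₂], V = [V₁ V₂], S. Let B_x (n×u), B_z (z×u), A_xv (n×v), A_zv (z×v) and Φ (v×z) be real matrices such that I − A_zv·Φ is invertible. If the stacked matrix col{U₂ᵀ·B_x, B_z} has full row rank, then the matrix [E B] has full row rank, where B = B_x + A_xv·Φ·(I − A_zv·Φ)⁻¹·B_z. -/
open Matrix

noncomputable section

/-- A real matrix has full row rank iff the only left null vector is zero. -/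
lemma frr_iff_vecMul_s10 {m k : Type*} [Fintype m] [Fintype k] (A : Matrix m k ℝ) :
    A.rank = Fintype.card m ↔ ∀ y : m → ℝ, y ᵥ* A = 0 → y = 0 := by
  rw [← Matrix.rank_transpose]
  have hdef : Aᵀ.rank = Module.finrank ℝ (LinearMap.range A.vecMulLinear) := by
    rw [Matrix.rank, Matrix.mulVecLin_transpose]
  rw [hdef]
  have hrn := LinearMap.finrank_range_add_finrank_ker A.vecMulLinear
  rw [Module.finrank_fintype_fun_eq_card] at hrn
  constructor
  · intro hr y hy
    have hker : LinearMap.ker A.vecMulLinear = ⊥ := by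
      rw [← Submodule.finrank_eq_zero (R := ℝ)]
      omega
    have : y ∈ LinearMap.ker A.vecMulLinear := by
      simp [LinearMap.mem_ker, hy]
    rw [hker] at this; simpa using this
  · intro hy
    have hker : LinearMap.ker A.vecMulLinear = ⊥ := by
      rw [Submodule.eq_bot_iff]
      intro y hy'
      exact hy y (by simpa [LinearMap.mem_ker] using hy')
    rw [hker, finrank_bot] at hrn
    omega

/-- If `col{U₂ᵀ·B_x, B_z}` has full row rank, then `[E  B]` has full row rank,
where `B = B_x + A_xv·Φ·(I − A_zv·Φ)⁻¹·B_z`. -/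
theorem concat_frr_of_col_frr (n r u v z : ℕ)
    (E : Matrix (Fin n) (Fin n) ℝ)
    (U₁ : Matrix (Fin n) (Fin r) ℝ) (U₂ : Matrix (Fin n) (Fin (n - r)) ℝ)
    (V₁ : Matrix (Fin n) (Fin r) ℝ) (V₂ : Matrix (Fin n) (Fin (n - r)) ℝ)
    (S : Matrix (Fin r) (Fin r) ℝ)
    (hsvd : IsSVDPartition E U₁ U₂ V₁ V₂ S)
    (Bx : Matrix (Fin n) (Fin u) ℝ) (Bz : Matrix (Fin z) (Fin u) ℝ)
    (Axv : Matrix (Fin n) (Fin v) ℝ) (Azv : Matrix (Fin z) (Fin v) ℝ)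
    (Φ : Matrix (Fin v) (Fin z) ℝ) (hinv : IsUnit (1 - Azv * Φ))
    (h : FRR (Matrix.fromRows (U₂ᵀ * Bx) Bz)) :
    FRR (Matrix.fromCols E (Bx + Axv * Φ * (1 - Azv * Φ)⁻¹ * Bz)) := by
  obtain ⟨hrm, hrn, hU, hV, ⟨d, hd, hS⟩, hE, -⟩ := hsvd
  -- U Uᵀ = 1
  have e : Fin n ≃ Fin r ⊕ Fin (n - r) :=
    (finSumFinEquiv.trans (finCongr (by omega))).symm
  have hU' : fromRows U₁ᵀ U₂ᵀ * fromCols U₁ U₂ = 1 := by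
    rw [← transpose_fromCols]; exact hU
  have hUUT : U₁ * U₁ᵀ + U₂ * U₂ᵀ = 1 := by
    have h2 : fromCols U₁ U₂ * fromRows U₁ᵀ U₂ᵀ = 1 :=
      (mul_eq_one_comm_of_equiv e).mpr hU'
    rwa [fromCols_mul_fromRows] at h2
  -- block identities
  rw [transpose_fromCols, fromRows_mul_fromCols, ← fromBlocks_one] at hU hV
  obtain ⟨hU11, -, -, -⟩ := fromBlocks_inj.mp hU
  obtain ⟨hV11, -, -, -⟩ := fromBlocks_inj.mp hV
  -- S is a unit
  have hSu : IsUnit S := by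
    rw [hS, Matrix.isUnit_iff_isUnit_det, Matrix.det_diagonal]
    exact isUnit_iff_ne_zero.mpr (Finset.prod_ne_zero_iff.mpr
      fun i _ => ne_of_gt (hd i))
  -- main argument
  refine (frr_iff_vecMul_s10 _).mpr fun y hy => ?_
  rw [vecMul_fromCols] at hy
  have hE0 : y ᵥ* E = 0 := funext fun i => congrFun hy (Sum.inl i)
  have hB0 : y ᵥ* (Bx + Axv * Φ * (1 - Azv * Φ)⁻¹ * Bz) = 0 :=
    funext fun i => congrFun hy (Sum.inr i)
  -- y ᵥ* U₁ = 0
  have hU1 : y ᵥ* U₁ = 0 := by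
    have hUS : y ᵥ* (U₁ * S) = 0 := by
      calc y ᵥ* (U₁ * S) = y ᵥ* (U₁ * S * (V₁ᵀ * V₁)) := by
            rw [hV11, Matrix.mul_one]
        _ = (y ᵥ* (U₁ * S * V₁ᵀ)) ᵥ* V₁ := by
            rw [Matrix.vecMul_vecMul, Matrix.mul_assoc (U₁ * S)]
        _ = 0 := by rw [← hE, hE0, Matrix.zero_vecMul]
    have hinj := vecMul_injective_iff_isUnit.mpr hSu
    have h0 : S.vecMul (y ᵥ* U₁) = S.vecMul 0 := by
      show (y ᵥ* U₁) ᵥ* S = (0 : Fin r → ℝ) ᵥ* S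
      rw [Matrix.vecMul_vecMul, hUS, Matrix.zero_vecMul]
    exact hinj h0
  -- y lies in the row space of U₂ᵀ
  have hyU2 : y = (y ᵥ* U₂) ᵥ* U₂ᵀ := by
    have h1 : y ᵥ* (U₁ * U₁ᵀ + U₂ * U₂ᵀ) = y := by rw [hUUT, Matrix.vecMul_one]
    rw [Matrix.vecMul_add, ← Matrix.vecMul_vecMul, ← Matrix.vecMul_vecMul,
      hU1, Matrix.zero_vecMul, zero_add] at h1
    exact h1.symm
  -- use full row rank of the stacked matrix
  have key : U₂ᵀ * Bx + U₂ᵀ * (Axv * Φ * (1 - Azv * Φ)⁻¹) * Bz =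
      U₂ᵀ * (Bx + Axv * Φ * (1 - Azv * Φ)⁻¹ * Bz) := by
    rw [Matrix.mul_add, Matrix.mul_assoc]
  have hc : Sum.elim (y ᵥ* U₂) ((y ᵥ* U₂) ᵥ* (U₂ᵀ * (Axv * Φ * (1 - Azv * Φ)⁻¹)))
      ᵥ* fromRows (U₂ᵀ * Bx) Bz = 0 := by
    calc Sum.elim (y ᵥ* U₂) ((y ᵥ* U₂) ᵥ* (U₂ᵀ * (Axv * Φ * (1 - Azv * Φ)⁻¹)))
        ᵥ* fromRows (U₂ᵀ * Bx) Bz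
        = (y ᵥ* U₂) ᵥ* (U₂ᵀ * Bx) +
            ((y ᵥ* U₂) ᵥ* (U₂ᵀ * (Axv * Φ * (1 - Azv * Φ)⁻¹))) ᵥ* Bz :=
          sumElim_vecMul_fromRows _ _ _ _
      _ = (y ᵥ* U₂) ᵥ* (U₂ᵀ * Bx + U₂ᵀ * (Axv * Φ * (1 - Azv * Φ)⁻¹) * Bz) := by
          simp only [Matrix.vecMul_add, Matrix.vecMul_vecMul, Matrix.mul_assoc]
      _ = y ᵥ* (Bx + Axv * Φ * (1 - Azv * Φ)⁻¹ * Bz) := by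
          rw [key, ← Matrix.vecMul_vecMul, ← hyU2]
      _ = 0 := hB0
  have hc0 := (frr_iff_vecMul_s10 _).mp h _ hc
  have hw0 : y ᵥ* U₂ = 0 := funext fun i => congrFun hc0 (Sum.inl i)
  rw [hyU2, hw0, Matrix.zero_vecMul]
end
end

section
/- Let E be an m×n real matrix of rank r with SVD-partition U = [U₁ U₂], V = [V₁ V₂], S, and let A_xv (m×v), B_x (m×u), C_v (y×v), D_u (y×u) be real matrices. If the matrix [U₁ A_xv B_x] does not have full row rank, then for every u×y real matrix F with I − F·D_u invertible, the matrix [U₁, A_xv + B_x·(I − F·D_u)⁻¹·F·C_v, B_x·(I − F·D_u)⁻¹·F] does not have full row rank. -/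
open Matrix

noncomputable section

/-- If `[U₁  A_xv  B_x]` does not have full row rank, then for every `F` with
`I − F·D_u` invertible, the matrix
`[U₁, A_xv + B_x·(I − F·D_u)⁻¹·F·C_v, B_x·(I − F·D_u)⁻¹·F]` does not have full
row rank. -/
theorem not_frr_feedback (m n r v u y : ℕ)
    (E : Matrix (Fin m) (Fin n) ℝ)
    (U₁ : Matrix (Fin m) (Fin r) ℝ) (U₂ : Matrix (Fin m) (Fin (m - r)) ℝ)
    (V₁ : Matrix (Fin n) (Fin r) ℝ) (V₂ : Matrix (Fin n) (Fin (n - r)) ℝ)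
    (S : Matrix (Fin r) (Fin r) ℝ)
    (hsvd : IsSVDPartition E U₁ U₂ V₁ V₂ S)
    (Axv : Matrix (Fin m) (Fin v) ℝ) (Bx : Matrix (Fin m) (Fin u) ℝ)
    (Cv : Matrix (Fin y) (Fin v) ℝ) (Du : Matrix (Fin y) (Fin u) ℝ)
    (h : ¬ FRR (Matrix.fromCols U₁ (Matrix.fromCols Axv Bx)))
    (F : Matrix (Fin u) (Fin y) ℝ) (hF : IsUnit (1 - F * Du)) :
    ¬ FRR (Matrix.fromCols U₁ (Matrix.fromCols
        (Axv + Bx * (1 - F * Du)⁻¹ * F * Cv) (Bx * (1 - F * Du)⁻¹ * F))) := by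
  intro hnew
  apply h
  set G : Matrix (Fin u) (Fin y) ℝ := (1 - F * Du)⁻¹ * F with hG
  have key : Matrix.fromCols U₁ (Matrix.fromCols
        (Axv + Bx * (1 - F * Du)⁻¹ * F * Cv) (Bx * (1 - F * Du)⁻¹ * F))
      = (Matrix.fromCols U₁ (Matrix.fromCols Axv Bx) : Matrix (Fin m) (Fin r ⊕ Fin v ⊕ Fin u) ℝ) *
        (Matrix.fromBlocks 1 0 0 (Matrix.fromBlocks 1 0 (G * Cv) G) :
          Matrix (Fin r ⊕ Fin v ⊕ Fin u) (Fin r ⊕ Fin v ⊕ Fin y) ℝ) := by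
    rw [Matrix.fromCols_mul_fromBlocks, Matrix.fromCols_mul_fromBlocks]
    simp [hG, Matrix.mul_assoc]
  have hle : (Matrix.fromCols U₁ (Matrix.fromCols
        (Axv + Bx * (1 - F * Du)⁻¹ * F * Cv) (Bx * (1 - F * Du)⁻¹ * F))).rank
      ≤ (Matrix.fromCols U₁ (Matrix.fromCols Axv Bx)).rank := by
    rw [key]; exact Matrix.rank_mul_le_left _ _
  have hub : (Matrix.fromCols U₁ (Matrix.fromCols Axv Bx)).rank
      ≤ Fintype.card (Fin m) := Matrix.rank_le_card_height _
  unfold FRR at hnew ⊢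
  omega
end
end
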